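/- arXiv:2212.05130 — 3 statements merged into one kernel-verified Lean document; each statement's English description precedes it below -/
import Mathlib

section
/- Let N > 1 and define f(t,η) = (1 + η - t^N)/(1 - t) on [0,1) × [0,∞), and g(η) = sup{ t - s : f(t,0) ≤ f(s,η) }. Then g(η) → 0 as η → 0⁺. -/
open Filter Set Topology

/-- The function `f(t,η) = (1 + η - t^N)/(1 - t)`. -/
noncomputable def fAux (N t η : ℝ) : ℝ := (1 + η - t ^ N) / (1 - t)

/-- `g(η) = sup { t - s : f(t,0) ≤ f(s,η), t,s ∈ [0,1) }`. -/
noncomputable def gAux (N η : ℝ) : ℝ :=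
  sSup { d : ℝ | ∃ t ∈ Ico (0:ℝ) 1, ∃ s ∈ Ico (0:ℝ) 1,
    d = t - s ∧ fAux N t 0 ≤ fAux N s η }

lemma fAux_split (N s η : ℝ) (hs : s < 1) :
    fAux N s η = fAux N s 0 + η / (1 - s) := by
  have h : (1 - s) ≠ 0 := by linarith
  unfold fAux
  field_simp
  ring

/-- `fAux N · 0` is strictly monotone on `[0,1)`. -/
lemma fAux_strictMonoOn (N : ℝ) (hN : 1 < N) :
    StrictMonoOn (fun t => fAux N t 0) (Ico (0:ℝ) 1) := by
  intro a ha b hb hab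
  have key := (strictConvexOn_rpow hN).secant_strict_mono (a := (1:ℝ))
    (x := a) (y := b) (by simp) ha.1
    hb.1 (ne_of_lt ha.2) (ne_of_lt hb.2) hab
  simp only [Real.one_rpow] at key
  have h1 : fAux N a 0 = (a ^ N - 1) / (a - 1) := by
    unfold fAux; rw [← neg_div_neg_eq]; ring_nf
  have h2 : fAux N b 0 = (b ^ N - 1) / (b - 1) := by
    unfold fAux; rw [← neg_div_neg_eq]; ring_nf
  simpa [h1, h2] using key

lemma fAux_continuousOn (N : ℝ) (hN : 1 < N) :
    ContinuousOn (fun t => fAux N t 0) (Ico (0:ℝ) 1) := by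
  apply ContinuousOn.div
  · apply ContinuousOn.sub continuousOn_const
    intro x hx
    exact (Real.continuousAt_rpow_const x N (Or.inr (by linarith))).continuousWithinAt
  · exact (continuous_const.sub continuous_id).continuousOn
  · intro x hx
    have := hx.2
    intro h
    simp only [sub_eq_zero] at h
    exact absurd h.symm (ne_of_lt hx.2)

/-- Key quantitative lemma. -/
lemma key_lemma (N : ℝ) (hN : 1 < N) {ε : ℝ} (hε : 0 < ε) (hε1 : ε < 1) :
    ∃ δ > 0, ∀ η : ℝ, 0 < η → η < δ → ∀ t ∈ Ico (0:ℝ) 1, ∀ s ∈ Ico (0:ℝ) 1,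
      fAux N t 0 ≤ fAux N s η → t - s ≤ ε := by
  -- the minimum of F(s+ε/2) - F(s) on [0, 1-ε]
  set F := fun t => fAux N t 0 with hF
  have hsub : ∀ s ∈ Icc (0:ℝ) (1-ε), s ∈ Ico (0:ℝ) 1 ∧ s + ε/2 ∈ Ico (0:ℝ) 1 := by
    intro s hs
    obtain ⟨h0, h1⟩ := hs
    constructor
    · exact ⟨h0, by linarith⟩
    · exact ⟨by linarith, by linarith⟩
  have hcont : ContinuousOn (fun s => F (s + ε/2) - F s) (Icc (0:ℝ) (1-ε)) := by
    apply ContinuousOn.sub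
    · exact (fAux_continuousOn N hN).comp
        (continuous_id.add continuous_const).continuousOn
        (fun s hs => (hsub s hs).2)
    · exact (fAux_continuousOn N hN).mono (fun s hs => (hsub s hs).1)
  have hne : (Icc (0:ℝ) (1-ε)).Nonempty := ⟨0, le_refl _, by linarith⟩
  obtain ⟨s₀, hs₀, hmin⟩ := isCompact_Icc.exists_isMinOn hne hcont
  set m := F (s₀ + ε/2) - F s₀ with hm
  have hmpos : 0 < m := by
    have := fAux_strictMonoOn N hN (hsub s₀ hs₀).1 (hsub s₀ hs₀).2 (by linarith)
    simpa [hm, sub_pos] using this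
  refine ⟨ε * m, by positivity, ?_⟩
  intro η hη hηδ t ht s hs hle
  by_contra hcon
  push_neg at hcon
  -- so t - s > ε
  have hs1 : s ≤ 1 - ε := by
    by_contra h
    push_neg at h
    have : t - s < ε := by
      have := ht.2; linarith
    linarith
  have hsmem : s ∈ Icc (0:ℝ) (1-ε) := ⟨hs.1, hs1⟩
  have hmono := fAux_strictMonoOn N hN (hsub s hsmem).2 ht (by linarith)
  have hmins : m ≤ F (s + ε/2) - F s := hmin hsmem
  rw [fAux_split N s η hs.2] at hle
  have hden : η / (1 - s) ≤ η / ε :=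
    div_le_div_of_nonneg_left (le_of_lt hη) hε (by linarith)
  have : η / ε < m := by
    rw [div_lt_iff₀ hε]
    linarith [hηδ, mul_comm ε m]
  have hFts : F (s + ε/2) < F t := hmono
  simp only [hF] at hle hmins hFts
  linarith

lemma gAux_mem (N η : ℝ) (hη : 0 ≤ η) :
    (0:ℝ) ∈ { d : ℝ | ∃ t ∈ Ico (0:ℝ) 1, ∃ s ∈ Ico (0:ℝ) 1,
      d = t - s ∧ fAux N t 0 ≤ fAux N s η } := by
  refine ⟨0, ⟨le_refl _, one_pos⟩, 0, ⟨le_refl _, one_pos⟩, by ring, ?_⟩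
  unfold fAux
  simp
  linarith

lemma gAux_bdd (N η : ℝ) :
    BddAbove { d : ℝ | ∃ t ∈ Ico (0:ℝ) 1, ∃ s ∈ Ico (0:ℝ) 1,
      d = t - s ∧ fAux N t 0 ≤ fAux N s η } := by
  refine ⟨1, fun d hd => ?_⟩
  obtain ⟨t, ht, s, hs, hd, _⟩ := hd
  have := ht.2; have := hs.1
  linarith [hd ▸ (by linarith : t - s ≤ 1)]

/-- `g(η) → 0` as `η → 0⁺`. -/
theorem stmt0 (N : ℝ) (hN : 1 < N) :
    Tendsto (gAux N) (𝓝[>] (0:ℝ)) (𝓝 0) := by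
  rw [Metric.tendsto_nhds]
  intro ε hε
  set ε' := min (ε/2) (1/2) with hε'
  have hε'pos : 0 < ε' := lt_min (by linarith) (by norm_num)
  have hε'lt1 : ε' < 1 := lt_of_le_of_lt (min_le_right _ _) (by norm_num)
  obtain ⟨δ, hδpos, hδ⟩ := key_lemma N hN hε'pos hε'lt1
  filter_upwards [Ioo_mem_nhdsGT_of_mem (by constructor <;> [exact le_refl (0:ℝ); exact hδpos])]
    with η hη
  obtain ⟨hη0, hηδ⟩ := hη
  have hbdd := gAux_bdd N η
  have hmem := gAux_mem N η (le_of_lt hη0)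
  have hge : (0:ℝ) ≤ gAux N η := le_csSup hbdd hmem
  have hle : gAux N η ≤ ε' := by
    apply csSup_le ⟨0, hmem⟩
    rintro d ⟨t, ht, s, hs, rfl, hfd⟩
    exact hδ η hη0 hηδ t ht s hs hfd
  have : gAux N η < ε := lt_of_le_of_lt hle (lt_of_le_of_lt (min_le_left _ _) (by linarith))
  rw [Real.dist_eq, sub_zero, abs_of_nonneg hge]
  exact this
end

section
/- Fix N > 1. The one-dimensional isoperimetric profile satisfies the expansion I_{N,D}(w) ≥ (N/D)·w^{1-1/N}·(1 - O(w^{1/N})) as w → 0⁺; that is, there exist constants C > 0 and w₀ > 0 depending only on N such that for all 0 < w ≤ w₀ and all D > 0, I_{N,D}(w) ≥ (N/D)·w^{1-1/N}·(1 - C·w^{1/N}). -/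
open Filter Set Topology

/-- The one-dimensional isoperimetric profile
`I_{N,D}(v) = (N/D) inf_{ξ ≥ 0} (min{v,1-v}(ξ+1)^N + max{v,1-v}ξ^N)^{(N-1)/N} / ((ξ+1)^N - ξ^N)`. -/
noncomputable def isoProfile (N D v : ℝ) : ℝ :=
  (N / D) * sInf { y : ℝ | ∃ ξ : ℝ, 0 ≤ ξ ∧
    y = (min v (1 - v) * (ξ + 1) ^ N + max v (1 - v) * ξ ^ N) ^ ((N - 1) / N)
          / ((ξ + 1) ^ N - ξ ^ N) }

/-- Mean-value-type bound `(ξ+1)^N - ξ^N ≤ N (ξ+1)^{N-1}` via Bernoulli. -/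
lemma aux_bern (N : ℝ) (hN : 1 < N) (ξ : ℝ) (hξ : 0 ≤ ξ) :
    (ξ + 1) ^ N - ξ ^ N ≤ N * (ξ + 1) ^ (N - 1) := by
  have ht0 : (0:ℝ) < ξ + 1 := by linarith
  have htN : (0:ℝ) < (ξ + 1) ^ N := Real.rpow_pos_of_pos ht0 N
  have hb : 1 + N * (-1 / (ξ + 1)) ≤ (1 + (-1 / (ξ + 1))) ^ N := by
    apply one_add_mul_self_le_rpow_one_add _ hN.le
    rw [neg_div, neg_le, neg_neg]
    rw [div_le_one ht0]; linarith
  have h1 : (1 + (-1 / (ξ + 1))) = ξ / (ξ + 1) := by field_simp; ring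
  have h2 : (ξ / (ξ + 1)) ^ N = ξ ^ N / (ξ + 1) ^ N :=
    Real.div_rpow hξ ht0.le N
  rw [h1, h2] at hb
  have hmul := mul_le_mul_of_nonneg_left hb htN.le
  rw [mul_div_cancel₀ _ (ne_of_gt htN)] at hmul
  have htn1 : (ξ + 1) ^ (N - 1) = (ξ + 1) ^ N / (ξ + 1) := by
    rw [Real.rpow_sub ht0, Real.rpow_one]
  rw [htn1]
  have : (ξ + 1) ^ N * (1 + N * (-1 / (ξ + 1))) =
      (ξ + 1) ^ N - N * ((ξ + 1) ^ N / (ξ + 1)) := by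
    field_simp; ring
  linarith [this ▸ hmul]

set_option maxHeartbeats 1000000 in
/-- The key pointwise lower bound for each `ξ ≥ 0`. -/
lemma aux_key (N : ℝ) (hN : 1 < N) (w : ℝ) (hw : 0 < w) (hw2 : w ≤ 1 / 2)
    (hwK : 2 ^ (N + 1) * N ^ (N / (N - 1)) * w ≤ 1) (ξ : ℝ) (hξ : 0 ≤ ξ) :
    w ^ ((N - 1) / N) * (1 - (2 ^ (N + 1) * N ^ (N / (N - 1))) ^ (1 / N) * w ^ (1 / N)) ≤
      (w * (ξ + 1) ^ N + (1 - w) * ξ ^ N) ^ ((N - 1) / N) / ((ξ + 1) ^ N - ξ ^ N) := by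
  have hN0 : (0:ℝ) < N := by linarith
  have hN1 : (0:ℝ) < N - 1 := by linarith
  set θ : ℝ := (N - 1) / N with hθdef
  have hθ : 0 < θ := div_pos hN1 hN0
  set K : ℝ := 2 ^ (N + 1) * N ^ (N / (N - 1)) with hKdef
  have hP : (0:ℝ) < N ^ (N / (N - 1)) := Real.rpow_pos_of_pos hN0 _
  have h2N : (0:ℝ) < 2 ^ N := Real.rpow_pos_of_pos two_pos N
  have hK : 0 < K := mul_pos (Real.rpow_pos_of_pos two_pos _) hP
  set ε : ℝ := K ^ (1 / N) * w ^ (1 / N) with hεdef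
  have hεnn : 0 ≤ ε :=
    mul_nonneg (Real.rpow_nonneg hK.le _) (Real.rpow_nonneg hw.le _)
  set A : ℝ := (ξ + 1) ^ N with hAdef
  set B : ℝ := ξ ^ N with hBdef
  have hApos : 0 < A := Real.rpow_pos_of_pos (by linarith) N
  have hBnn : 0 ≤ B := Real.rpow_nonneg hξ N
  have hAB : B < A := Real.rpow_lt_rpow hξ (lt_add_one ξ) hN0
  have hden : 0 < A - B := by linarith
  rw [le_div_iff₀ hden]
  have hNum0 : 0 ≤ w * A + (1 - w) * B := by
    have h1 := mul_nonneg hw.le hApos.le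
    have h2 := mul_nonneg (by linarith : (0:ℝ) ≤ 1 - w) hBnn
    linarith
  have hwθ : 0 ≤ w ^ θ := Real.rpow_nonneg hw.le θ
  by_cases hcase : B ≤ K * w
  · -- small ξ : ξ ≤ ε
    have hξε : ξ ≤ ε := by
      have h := Real.rpow_le_rpow hBnn hcase (by positivity : (0:ℝ) ≤ 1 / N)
      rw [hBdef, ← Real.rpow_mul hξ, mul_one_div, div_self hN0.ne', Real.rpow_one,
        Real.mul_rpow hK.le hw.le] at h
      exact h
    by_cases h1ε : 1 - ε ≤ 0
    · have hle : w ^ θ * (1 - ε) * (A - B) ≤ 0 := by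
        apply mul_nonpos_of_nonpos_of_nonneg _ hden.le
        exact mul_nonpos_of_nonneg_of_nonpos hwθ h1ε
      exact hle.trans (Real.rpow_nonneg hNum0 θ)
    · push_neg at h1ε
      have hξ1 : (0:ℝ) < ξ + 1 := by linarith
      have hstep : (1 - ε) * A ≤ A ^ θ := by
        have hAθ : A ^ θ = A / (ξ + 1) := by
          have hθeq : θ = 1 - 1 / N := by
            rw [hθdef, sub_div, div_self hN0.ne']
          rw [hθeq, Real.rpow_sub hApos, Real.rpow_one, hAdef,
            ← Real.rpow_mul hξ1.le, mul_one_div, div_self hN0.ne', Real.rpow_one]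
        rw [hAθ, le_div_iff₀ hξ1]
        have hp : (1 - ε) * (ξ + 1) ≤ 1 := by nlinarith [mul_nonneg hεnn hξ]
        nlinarith [mul_le_mul_of_nonneg_left hp hApos.le]
      calc w ^ θ * (1 - ε) * (A - B) ≤ w ^ θ * ((1 - ε) * A) := by
            nlinarith [mul_nonneg (mul_nonneg hwθ h1ε.le) hBnn]
        _ ≤ w ^ θ * A ^ θ := mul_le_mul_of_nonneg_left hstep hwθ
        _ = (w * A) ^ θ := (Real.mul_rpow hw.le hApos.le).symm
        _ ≤ (w * A + (1 - w) * B) ^ θ := by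
            apply Real.rpow_le_rpow (mul_nonneg hw.le hApos.le) _ hθ.le
            nlinarith [mul_nonneg (by linarith : (0:ℝ) ≤ 1 - w) hBnn]
  · push_neg at hcase
    -- large ξ : use the (1-w) B term
    have hKI : N ^ (N / (N - 1)) * A ≤ (1 - w) / w * B := by
      have h12 : 1 / (2 * w) ≤ (1 - w) / w := by
        rw [div_le_div_iff₀ (by linarith) hw]
        nlinarith [mul_nonneg hw.le (by linarith : (0:ℝ) ≤ 1 - 2 * w)]
      have hmain : 2 * w * (N ^ (N / (N - 1)) * A) ≤ B := by
        have h2N1 : (2:ℝ) ^ (N + 1) = 2 * 2 ^ N := by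
          rw [Real.rpow_add two_pos, Real.rpow_one]; ring
        rcases le_total ξ 1 with hξ1 | hξ1
        · have hA2 : A ≤ 2 ^ N :=
            Real.rpow_le_rpow (by linarith) (by linarith) hN0.le
          have : 2 * w * (N ^ (N / (N - 1)) * A) ≤ K * w := by
            rw [hKdef, h2N1]
            nlinarith [mul_le_mul_of_nonneg_left hA2
              (mul_nonneg (mul_nonneg (by norm_num : (0:ℝ) ≤ 2) hw.le) hP.le)]
          linarith [hcase.le]
        · have hA2 : A ≤ 2 ^ N * B := by
            have : A ≤ (2 * ξ) ^ N :=
              Real.rpow_le_rpow (by linarith) (by linarith) hN0.le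
            rwa [Real.mul_rpow (by norm_num) hξ] at this
          have h1 : 2 * w * (N ^ (N / (N - 1)) * A) ≤ K * w * B := by
            rw [hKdef, h2N1]
            nlinarith [mul_le_mul_of_nonneg_left hA2
              (mul_nonneg (mul_nonneg (by norm_num : (0:ℝ) ≤ 2) hw.le) hP.le)]
          have h2 : K * w * B ≤ B := by
            nlinarith [mul_le_mul_of_nonneg_right hwK hBnn]
          linarith
      calc N ^ (N / (N - 1)) * A = 2 * w * (N ^ (N / (N - 1)) * A) * (1 / (2 * w)) := by
            field_simp
        _ ≤ B * ((1 - w) / w) := by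
            apply mul_le_mul hmain h12 (by positivity) hBnn
        _ = (1 - w) / w * B := by ring
    have hPθ : (N ^ (N / (N - 1))) ^ θ = N := by
      rw [← Real.rpow_mul hN0.le, hθdef]
      rw [div_mul_div_comm, mul_comm N (N-1), div_self (by positivity : (N-1)*N ≠ 0), Real.rpow_one]
    have hAθ1 : A ^ θ = (ξ + 1) ^ (N - 1) := by
      rw [hAdef, ← Real.rpow_mul (by linarith : (0:ℝ) ≤ ξ + 1), hθdef,
        mul_div_cancel₀ _ hN0.ne']
    have hAθpos : 0 < A ^ θ := Real.rpow_pos_of_pos hApos θ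
    have hABN : A - B ≤ N * A ^ θ := by
      rw [hAθ1]; exact aux_bern N hN ξ hξ
    have hNum : N * A ^ θ * w ^ θ ≤ (w * A + (1 - w) * B) ^ θ := by
      have hsub : (1 - w) * B ≤ w * A + (1 - w) * B := by
        nlinarith [mul_nonneg hw.le hApos.le]
      have hq : ((1 - w) / w * B) ^ θ ≥ N * A ^ θ := by
        calc ((1 - w) / w * B) ^ θ ≥ (N ^ (N / (N - 1)) * A) ^ θ := by
              apply Real.rpow_le_rpow (mul_nonneg hP.le hApos.le) hKI hθ.le
          _ = N * A ^ θ := by rw [Real.mul_rpow hP.le hApos.le, hPθ]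
      have hfrac : (1 - w) / w * B * w = (1 - w) * B := by field_simp
      calc N * A ^ θ * w ^ θ ≤ ((1 - w) / w * B) ^ θ * w ^ θ :=
            mul_le_mul_of_nonneg_right hq hwθ
        _ = ((1 - w) / w * B * w) ^ θ := by
            rw [Real.mul_rpow (mul_nonneg (div_nonneg (by linarith) hw.le) hBnn) hw.le]
        _ = ((1 - w) * B) ^ θ := by rw [hfrac]
        _ ≤ (w * A + (1 - w) * B) ^ θ :=
            Real.rpow_le_rpow (mul_nonneg (by linarith) hBnn) hsub hθ.le
    calc w ^ θ * (1 - ε) * (A - B) ≤ w ^ θ * (A - B) := by nlinarith [mul_nonneg (mul_nonneg hwθ hεnn) hden.le]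
      _ ≤ w ^ θ * (N * A ^ θ) := mul_le_mul_of_nonneg_left hABN hwθ
      _ = N * A ^ θ * w ^ θ := by ring
      _ ≤ (w * A + (1 - w) * B) ^ θ := hNum

/-- The expansion `I_{N,D}(w) ≥ (N/D) w^{1-1/N} (1 - C w^{1/N})` for small `w`,
with `C, w₀` depending only on `N`. -/
theorem stmt2 (N : ℝ) (hN : 1 < N) :
    ∃ C > (0:ℝ), ∃ w₀ > (0:ℝ), ∀ w : ℝ, 0 < w → w ≤ w₀ → ∀ D : ℝ, 0 < D →
      (N / D) * w ^ (1 - 1 / N) * (1 - C * w ^ (1 / N)) ≤ isoProfile N D w := by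
  have hN0 : (0:ℝ) < N := by linarith
  set K : ℝ := 2 ^ (N + 1) * N ^ (N / (N - 1)) with hKdef
  have hK : 0 < K :=
    mul_pos (Real.rpow_pos_of_pos two_pos _) (Real.rpow_pos_of_pos hN0 _)
  refine ⟨K ^ (1 / N), Real.rpow_pos_of_pos hK _, min (1 / 2) (1 / K),
    lt_min one_half_pos (by positivity), ?_⟩
  intro w hw hww D hD
  have hw2 : w ≤ 1 / 2 := hww.trans (min_le_left _ _)
  have hwK : K * w ≤ 1 := by
    have : w ≤ 1 / K := hww.trans (min_le_right _ _)
    rw [le_div_iff₀ hK] at this; linarith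
  unfold isoProfile
  have hmin : min w (1 - w) = w := min_eq_left (by linarith)
  have hmax : max w (1 - w) = 1 - w := max_eq_right (by linarith)
  have hθeq : 1 - 1 / N = (N - 1) / N := by
    rw [sub_div, div_self hN0.ne']
  have hlb : w ^ ((N - 1) / N) * (1 - K ^ (1 / N) * w ^ (1 / N)) ≤
      sInf { y : ℝ | ∃ ξ : ℝ, 0 ≤ ξ ∧
        y = (min w (1 - w) * (ξ + 1) ^ N + max w (1 - w) * ξ ^ N) ^ ((N - 1) / N)
              / ((ξ + 1) ^ N - ξ ^ N) } := by
    apply le_csInf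
    · exact ⟨_, 0, le_refl 0, rfl⟩
    · rintro y ⟨ξ, hξ, rfl⟩
      rw [hmin, hmax]
      exact aux_key N hN w hw hw2 hwK ξ hξ
  rw [hθeq, mul_assoc]
  exact mul_le_mul_of_nonneg_left hlb (by positivity)
end

section
/- Let N > 1 and let h : [0,D'] → [0,∞) satisfy that h^{1/(N-1)} is concave. Suppose the right derivative of h^{1/(N-1)} at a point b ∈ (0,D') is nonpositive. Then h(x) ≤ h(b)·((D'-x)/(D'-b))^{N-1} for all x ∈ [0,b], and h(x) ≤ h(b) for all x ∈ [b,D']. -/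
open Filter Set Topology

/-- If `h^{1/(N-1)}` is concave on `[0,D']` and its right derivative at `b ∈ (0,D')` is
nonpositive, then `h(x) ≤ h(b)((D'-x)/(D'-b))^{N-1}` on `[0,b]` and `h ≤ h(b)` on `[b,D']`. -/
theorem stmt4 (N D' b : ℝ) (h : ℝ → ℝ) (hN : 1 < N) (hD' : 0 < D') (hb : b ∈ Ioo (0:ℝ) D')
    (h_nonneg : ∀ x ∈ Icc (0:ℝ) D', 0 ≤ h x)
    (h_conc : ConcaveOn ℝ (Icc (0:ℝ) D') (fun x => h x ^ (1 / (N - 1))))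
    (t : ℝ) (ht : t ≤ 0)
    (h_deriv : Tendsto (fun z => (h (b + z) ^ (1 / (N - 1)) - h b ^ (1 / (N - 1))) / z)
      (𝓝[>] (0:ℝ)) (𝓝 t)) :
    (∀ x ∈ Icc (0:ℝ) b, h x ≤ h b * ((D' - x) / (D' - b)) ^ (N - 1)) ∧
    (∀ x ∈ Icc b D', h x ≤ h b) := by
  obtain ⟨hb0, hbD⟩ := hb
  have hN1 : (0:ℝ) < N - 1 := by linarith
  have hN1' : N - 1 ≠ 0 := ne_of_gt hN1
  set g : ℝ → ℝ := fun x => h x ^ (1 / (N - 1)) with hgdef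
  have hg_nonneg : ∀ x ∈ Icc (0:ℝ) D', 0 ≤ g x :=
    fun x hx => Real.rpow_nonneg (h_nonneg x hx) _
  have hbmem : b ∈ Icc (0:ℝ) D' := ⟨le_of_lt hb0, le_of_lt hbD⟩
  have hDmem : D' ∈ Icc (0:ℝ) D' := ⟨le_of_lt hD', le_refl _⟩
  have hrec : ∀ x ∈ Icc (0:ℝ) D', g x ^ (N - 1) = h x := by
    intro x hx
    rw [hgdef]
    rw [← Real.rpow_mul (h_nonneg x hx), one_div_mul_cancel hN1', Real.rpow_one]
  constructor
  · -- Part 1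
    intro x hx
    obtain ⟨hx0, hxb⟩ := hx
    have hxD : x < D' := lt_of_le_of_lt hxb hbD
    have hxmem : x ∈ Icc (0:ℝ) D' := ⟨hx0, le_of_lt hxD⟩
    have hDx : (0:ℝ) < D' - x := by linarith
    have hDb : (0:ℝ) < D' - b := by linarith
    set a : ℝ := (D' - b) / (D' - x) with hadef
    set c : ℝ := (b - x) / (D' - x) with hcdef
    have ha0 : 0 ≤ a := by positivity
    have hc0 : 0 ≤ c := by
      apply div_nonneg (by linarith) (le_of_lt hDx)
    have hac : a + c = 1 := by
      rw [hadef, hcdef, ← add_div, div_eq_one_iff_eq (ne_of_gt hDx)]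
      ring
    have hcomb : a • x + c • D' = b := by
      simp only [smul_eq_mul, hadef, hcdef]
      rw [div_mul_eq_mul_div, div_mul_eq_mul_div, ← add_div,
        div_eq_iff (ne_of_gt hDx)]
      ring
    have hconc := h_conc.2 hxmem hDmem ha0 hc0 hac
    rw [hcomb] at hconc
    simp only [smul_eq_mul] at hconc
    -- hconc : a * g x + c * g D' ≤ g b
    have hgD : 0 ≤ g D' := hg_nonneg D' hDmem
    have hkey : a * g x ≤ g b := by nlinarith [mul_nonneg hc0 hgD]
    have hgx : g x ≤ g b * ((D' - x) / (D' - b)) := by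
      rw [hadef] at hkey
      rw [div_mul_eq_mul_div, div_le_iff₀ hDx] at hkey
      rw [← mul_div_assoc, le_div_iff₀ hDb]
      nlinarith
    have hfinal : g x ^ (N - 1) ≤ (g b * ((D' - x) / (D' - b))) ^ (N - 1) :=
      Real.rpow_le_rpow (hg_nonneg x hxmem) hgx (le_of_lt hN1)
    rw [hrec x hxmem] at hfinal
    rw [Real.mul_rpow (hg_nonneg b hbmem) (by positivity)] at hfinal
    rw [hrec b hbmem] at hfinal
    exact hfinal
  · -- Part 2
    intro y hy
    obtain ⟨hby, hyD⟩ := hy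
    rcases eq_or_lt_of_le hby with rfl | hby'
    · exact le_refl _
    have hymem : y ∈ Icc (0:ℝ) D' := ⟨by linarith, hyD⟩
    have hyb : (0:ℝ) < y - b := by linarith
    -- slope bound: (g y - g b)/(y - b) ≤ t
    have hslope : (g y - g b) / (y - b) ≤ t := by
      refine ge_of_tendsto h_deriv ?_
      filter_upwards [Ioo_mem_nhdsGT_of_mem (Set.left_mem_Ico.mpr hyb)] with z hz
      obtain ⟨hz0, hzyb⟩ := hz
      have hbz : b + z ∈ Icc (0:ℝ) D' := ⟨by linarith, by linarith⟩
      set u : ℝ := z / (y - b) with hudef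
      have hu0 : 0 ≤ u := by positivity
      have hu1 : 0 ≤ 1 - u := by
        have : u ≤ 1 := by rw [hudef, div_le_one hyb]; linarith
        linarith
      have hsum : (1 - u) + u = 1 := by ring
      have hcomb : (1 - u) • b + u • y = b + z := by
        simp only [smul_eq_mul, hudef]
        field_simp
        ring
      have hconc := h_conc.2 hbmem hymem hu1 hu0 hsum
      rw [hcomb] at hconc
      simp only [smul_eq_mul] at hconc
      -- hconc : (1-u) * g b + u * g y ≤ g (b+z)
      show (g y - g b) / (y - b) ≤ (g (b + z) - g b) / z
      rw [div_le_div_iff₀ hyb hz0]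
      have hu : u = z / (y - b) := hudef
      have : u * (g y - g b) ≤ g (b + z) - g b := by nlinarith
      rw [hudef] at this
      rw [div_mul_eq_mul_div, div_le_iff₀ hyb] at this
      nlinarith
    have hgy : g y ≤ g b := by
      have := hslope.trans ht
      rw [div_nonpos_iff] at this
      rcases this with ⟨h1, h2⟩ | ⟨h1, _⟩
      · linarith
      · linarith
    calc h y = g y ^ (N - 1) := (hrec y hymem).symm
      _ ≤ g b ^ (N - 1) := Real.rpow_le_rpow (hg_nonneg y hymem) hgy (le_of_lt hN1)
      _ = h b := hrec b hbmem
end
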